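/- Suppose d_k = d ≥ 1 for all k and K(K+1) d > Σ_{k=1}^{K} (M_k + N_k). Then there exists a nonzero polynomial p in the channel entries such that for every channel realization (H_{kj})_{(k,j)∈J} at which p does not vanish, there exists no linear interference-alignment solution on all of J. (Corollary 1(a): with equal degrees of freedom d per user, interference alignment is generically impossible unless d ≤ Σ_k (M_k + N_k) / (K(K+1)).) -/

import Mathlib

open Matrix

/-! ### Auxiliary lemma: any elements of `σ`-variate polynomials, indexed by a larger
finite type, are algebraically dependent. -/

lemma finsupp_apply_le_sum {σ : Type} (s : σ →₀ ℕ) (i : σ) : s i ≤ s.sum fun _ e => e := by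
  by_cases h : s i = 0
  · simp [h]
  · exact Finset.single_le_sum (fun _ _ => Nat.zero_le _) (Finsupp.mem_support_iff.mpr h)

set_option maxHeartbeats 1000000 in
lemma alg_dep {σ : Type} [Fintype σ] {ι : Type} [Fintype ι]
    (h : Fintype.card σ < Fintype.card ι)
    (f : ι → MvPolynomial σ ℂ) :
    ∃ P : MvPolynomial ι ℂ, P ≠ 0 ∧ MvPolynomial.aeval f P = 0 := by
  classical
  by_contra hcon
  push_neg at hcon
  have hinj : Function.Injective (MvPolynomial.aeval f :
      MvPolynomial ι ℂ →ₐ[ℂ] MvPolynomial σ ℂ) := by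
    intro a b hab
    by_contra hne
    exact hcon (a - b) (sub_ne_zero.mpr hne) (by rw [map_sub, hab, sub_self])
  set n := Fintype.card σ with hn
  set m := Fintype.card ι with hm
  have hm1 : 1 ≤ m := le_trans (Nat.le_add_left 1 n) h
  set D := (Finset.univ.sup fun i => (f i).totalDegree) + 1 with hD
  have hD1 : 1 ≤ D := Nat.le_add_left 1 _
  set u := (2 * m * D) ^ n + 1 with hu
  have hu1 : 1 ≤ u := Nat.le_add_left 1 _
  set B := m * u * D with hB
  set e : (ι → Fin u) → (ι →₀ ℕ) :=
    fun a => Finsupp.equivFunOnFinite.symm fun i => (a i : ℕ) with he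
  have he_inj : Function.Injective e := by
    intro a b hab
    have h2 := Finsupp.equivFunOnFinite.symm.injective hab
    funext i
    exact Fin.ext (congrFun h2 i)
  set v : (ι → Fin u) → MvPolynomial σ ℂ :=
    ⇑(MvPolynomial.aeval f).toLinearMap ∘ fun a => MvPolynomial.monomial (e a) (1:ℂ) with hv
  have hind : LinearIndependent ℂ v := by
    have h1 : LinearIndependent ℂ fun a : ι → Fin u => MvPolynomial.monomial (e a) (1 : ℂ) := by
      have := (MvPolynomial.basisMonomials ι ℂ).linearIndependent.comp e he_inj
      rwa [MvPolynomial.coe_basisMonomials] at this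
    exact h1.map' (MvPolynomial.aeval f).toLinearMap (LinearMap.ker_eq_bot.mpr hinj)
  set w : Finset (MvPolynomial σ ℂ) :=
    Finset.univ.image
      (fun g : σ → Fin (B + 1) =>
        MvPolynomial.monomial (Finsupp.equivFunOnFinite.symm fun i => (g i : ℕ)) (1 : ℂ)) with hw
  have hspan : Set.range v ≤ Submodule.span ℂ (w : Set (MvPolynomial σ ℂ)) := by
    rintro _ ⟨a, rfl⟩
    have hdeg : (v a).totalDegree ≤ B := by
      have hva : v a = ∏ i, f i ^ (a i : ℕ) := by
        show (MvPolynomial.aeval f).toLinearMap (MvPolynomial.monomial (e a) 1) = _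
        rw [AlgHom.toLinearMap_apply, MvPolynomial.aeval_monomial, _root_.map_one, one_mul]
        refine Finsupp.prod_fintype _ _ (fun i => pow_zero _) |>.trans ?_
        simp [e]
      rw [hva]
      calc (∏ i, f i ^ (a i : ℕ)).totalDegree
          ≤ ∑ i, (f i ^ (a i : ℕ)).totalDegree := MvPolynomial.totalDegree_finset_prod _ _
        _ ≤ ∑ _i : ι, u * D := by
            refine Finset.sum_le_sum fun i _ => ?_
            refine (MvPolynomial.totalDegree_pow _ _).trans ?_
            exact Nat.mul_le_mul (a i).is_lt.le
              (le_trans (Finset.le_sup (f := fun i => (f i).totalDegree)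
                (Finset.mem_univ i)) (Nat.le_succ _))
        _ = m * u * D := by rw [Finset.sum_const, Finset.card_univ, smul_eq_mul, mul_assoc]
    rw [(v a).as_sum]
    refine Submodule.sum_mem _ fun s hs => ?_
    have hcs : MvPolynomial.monomial s (MvPolynomial.coeff s (v a))
        = MvPolynomial.coeff s (v a) • MvPolynomial.monomial s (1 : ℂ) := by
      rw [MvPolynomial.smul_monomial, smul_eq_mul, mul_one]
    rw [hcs]
    refine Submodule.smul_mem _ _ (Submodule.subset_span ?_)
    have hsb : ∀ i, s i < B + 1 := fun i =>
      Nat.lt_succ_of_le <| le_trans (finsupp_apply_le_sum s i)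
        (le_trans (MvPolynomial.le_totalDegree hs) hdeg)
    refine Finset.mem_coe.mpr (Finset.mem_image.mpr ⟨fun i => ⟨s i, hsb i⟩,
      Finset.mem_univ _, ?_⟩)
    simpa using Finsupp.equivFunOnFinite_symm_coe s
  have hcard0 := linearIndependent_le_span_aux' v hind (w : Set _) hspan
  have hcard : u ^ m ≤ w.card := by
    simpa [Fintype.card_fun] using hcard0
  have hwcard : w.card ≤ (B + 1) ^ n := by
    refine (Finset.card_image_le).trans ?_
    simp [Fintype.card_fun, hn]
  -- numeric contradiction
  clear_value m n D u B
  have h1 : u ^ m ≤ (B + 1) ^ n := le_trans hcard hwcard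
  have hB1 : B + 1 ≤ 2 * m * u * D := by
    have h5 : 1 ≤ m * u * D := Nat.one_le_iff_ne_zero.mpr (by positivity)
    have h6 : 2 * m * u * D = m * u * D + m * u * D := by ring
    omega
  have h2 : u ^ m ≤ (2 * m * D) ^ n * u ^ n := by
    calc u ^ m ≤ (2 * m * u * D) ^ n := le_trans h1 (Nat.pow_le_pow_left hB1 n)
      _ = (2 * m * D) ^ n * u ^ n := by ring
  have h3 : u ^ n * u ≤ u ^ m := by
    rw [← pow_succ]
    exact Nat.pow_le_pow_right hu1 h
  have h4 : u ≤ (2 * m * D) ^ n := by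
    have := le_trans h3 h2
    rw [mul_comm ((2 * m * D) ^ n) (u ^ n)] at this
    exact Nat.le_of_mul_le_mul_left this (Nat.pow_pos hu1 : 0 < u ^ n)
  omega

/-! ### Matrix lemmas -/

lemma sum_split {n d : ℕ} (r : Fin d ↪ Fin n) (F : Fin n → ℂ) :
    ∑ x, F x = (∑ a, F (r a)) + ∑ x : {x // x ∉ Set.range ⇑r}, F x.1 := by
  classical
  rw [← Equiv.sum_comp (Equiv.sumCompl (· ∈ Set.range ⇑r)) F, Fintype.sum_sum_type]
  congr 1
  · simp only [Equiv.sumCompl_apply_inl]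
    rw [← Equiv.sum_comp (Equiv.ofInjective ⇑r r.injective) (fun x => F x.1)]
    rfl

lemma solve_entry {Nn Mm d : ℕ} (U : Matrix (Fin Nn) (Fin d) ℂ)
    (V : Matrix (Fin Mm) (Fin d) ℂ) (H : Matrix (Fin Nn) (Fin Mm) ℂ)
    (r : Fin d ↪ Fin Nn) (s : Fin d ↪ Fin Mm)
    (hU : ∀ a a', U (r a) a' = if a = a' then 1 else 0)
    (hV : ∀ b b', V (s b) b' = if b = b' then 1 else 0)
    (hc : Uᴴ * H * V = 0) (a b : Fin d) :
    H (r a) (s b) =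
      -((∑ y' : {y // y ∉ Set.range ⇑s}, H (r a) y'.1 * V y'.1 b)
        + ∑ x' : {x // x ∉ Set.range ⇑r},
            star (U x'.1 a) * ∑ y', H x'.1 y' * V y' b) := by
  classical
  have h0 : (Uᴴ * H * V) a b = 0 := by rw [hc]; rfl
  rw [Matrix.mul_apply] at h0
  simp only [Matrix.mul_apply, Matrix.conjTranspose_apply] at h0
  have h1 : ∑ x', star (U x' a) * ∑ y', H x' y' * V y' b = 0 := by
    rw [← h0]
    simp only [Finset.sum_mul]
    rw [Finset.sum_comm]
    refine Finset.sum_congr rfl fun x' _ => ?_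
    rw [Finset.mul_sum]
    simp only [mul_assoc]
  rw [sum_split r (fun x' => star (U x' a) * ∑ y', H x' y' * V y' b)] at h1
  have h2 : ∀ a', star (U (r a') a) * (∑ y', H (r a') y' * V y' b)
      = if a' = a then (∑ y', H (r a) y' * V y' b) else 0 := by
    intro a'
    rw [hU a' a]
    split_ifs with h
    · subst h; simp
    · simp
  rw [Finset.sum_congr rfl (fun a' _ => h2 a')] at h1
  rw [Finset.sum_ite_eq' Finset.univ a (fun _ => ∑ y', H (r a) y' * V y' b)] at h1
  simp only [Finset.mem_univ, if_true] at h1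
  have h3 : ∑ y', H (r a) y' * V y' b
      = H (r a) (s b) + ∑ y' : {y // y ∉ Set.range ⇑s}, H (r a) y'.1 * V y'.1 b := by
    rw [sum_split s (fun y' => H (r a) y' * V y' b)]
    congr 1
    have h4 : ∀ b', H (r a) (s b') * V (s b') b
        = if b' = b then H (r a) (s b) else 0 := by
      intro b'
      rw [hV b' b]
      split_ifs with h
      · subst h; simp
      · simp
    rw [Finset.sum_congr rfl (fun b' _ => h4 b')]
    rw [Finset.sum_ite_eq' Finset.univ b (fun _ => H (r a) (s b))]
    simp
  rw [h3] at h1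
  linear_combination h1

lemma exists_unit_submatrix {Nn d : ℕ} (U : Matrix (Fin Nn) (Fin d) ℂ)
    (hU : U.rank = d) : ∃ r : Fin d ↪ Fin Nn, IsUnit (U.submatrix r id) := by
  classical
  obtain ⟨b, hbsub, hbspan, hbind⟩ := exists_linearIndependent ℂ (Set.range U)
  have hbfin : b.Finite := (Set.finite_range U).subset hbsub
  haveI : Fintype b := hbfin.fintype
  have hcard : Fintype.card b = d := by
    have h1 := finrank_span_set_eq_card hbind
    rw [hbspan, show Set.range U = Set.range U.row from rfl, ← Matrix.rank_eq_finrank_span_row, hU] at h1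
    rw [Set.toFinset_card] at h1
    omega
  set eqv := (Fintype.equivFinOfCardEq hcard).symm with heqv
  have hpick : ∀ x : b, ∃ i, U i = (x : Fin d → ℂ) := fun x => hbsub x.2
  choose pick hpickspec using hpick
  have hpickinj : Function.Injective pick := by
    intro x y hxy
    have := congrArg U hxy
    rw [hpickspec x, hpickspec y] at this
    exact Subtype.ext this
  refine ⟨⟨fun a => pick (eqv a), hpickinj.comp eqv.injective⟩, ?_⟩
  rw [← Matrix.linearIndependent_rows_iff_isUnit]
  have h5 := hbind.comp eqv eqv.injective
  convert h5 using 1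
  funext i j
  simp only [Function.comp_apply, Matrix.submatrix_apply, id_eq]
  exact congrFun (hpickspec (eqv i)) j
  rfl

lemma eval_aeval' {σ τ : Type} (x : τ → ℂ) (g : σ → MvPolynomial τ ℂ)
    (P : MvPolynomial σ ℂ) :
    MvPolynomial.eval x (MvPolynomial.aeval g P)
      = MvPolynomial.eval (fun i => MvPolynomial.eval x (g i)) P := by
  induction P using MvPolynomial.induction_on with
  | C a => simp
  | add p q hp hq => rw [map_add, map_add, map_add, hp, hq]
  | mul_X p i hp => rw [_root_.map_mul, _root_.map_mul, _root_.map_mul, hp, MvPolynomial.aeval_X, MvPolynomial.eval_X]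

/-! ### Chart machinery -/

namespace IA

variable {K : ℕ} {M N : Fin K → ℕ} {d : ℕ}

abbrev Idx (M N : Fin K → ℕ) : Type :=
  Σ q : {q : Fin K × Fin K // q.1 ≠ q.2}, Fin (N q.1.1) × Fin (M q.1.2)

variable (r : ∀ k, Fin d ↪ Fin (N k)) (s : ∀ k, Fin d ↪ Fin (M k))

def Det (v : Idx M N) : Prop :=
  v.2.1 ∈ Set.range ⇑(r v.1.1.1) ∧ v.2.2 ∈ Set.range ⇑(s v.1.1.2)

abbrev Par : Type :=
  (Σ k : Fin K, {x : Fin (N k) // x ∉ Set.range ⇑(r k)} × Fin d) ⊕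
  ((Σ k : Fin K, {y : Fin (M k) // y ∉ Set.range ⇑(s k)} × Fin d) ⊕
   {v : Idx M N // ¬ Det r s v})

noncomputable instance : Fintype (Par r s) := Fintype.ofFinite _

open MvPolynomial in
open scoped Classical in
noncomputable def Vpoly (j : Fin K) (y : Fin (M j)) (b : Fin d) :
    MvPolynomial (Par r s) ℂ :=
  if h : y ∈ Set.range ⇑(s j) then C (if h.choose = b then 1 else 0)
  else X (Sum.inr (Sum.inl ⟨j, ⟨y, h⟩, b⟩))

open MvPolynomial in
open scoped Classical in
noncomputable def g (v : Idx M N) : MvPolynomial (Par r s) ℂ :=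
  if hdet : Det r s v then
    -((∑ y' : {y // y ∉ Set.range ⇑(s v.1.1.2)},
        X (Sum.inr (Sum.inr ⟨⟨v.1, (v.2.1, y'.1)⟩, fun hD => y'.2 hD.2⟩)) *
        X (Sum.inr (Sum.inl ⟨v.1.1.2, y', hdet.2.choose⟩)))
      + ∑ x' : {x // x ∉ Set.range ⇑(r v.1.1.1)},
          X (Sum.inl ⟨v.1.1.1, x', hdet.1.choose⟩) *
          ∑ y' : Fin (M v.1.1.2),
            X (Sum.inr (Sum.inr ⟨⟨v.1, (x'.1, y')⟩, fun hD => x'.2 hD.1⟩)) *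
            Vpoly r s v.1.1.2 y' hdet.2.choose)
  else X (Sum.inr (Sum.inr ⟨v, hdet⟩))

variable (U : ∀ k, Matrix (Fin (N k)) (Fin d) ℂ)
  (V : ∀ k, Matrix (Fin (M k)) (Fin d) ℂ)
  (H : ∀ q : {q : Fin K × Fin K // q.1 ≠ q.2}, Matrix (Fin (N q.1.1)) (Fin (M q.1.2)) ℂ)

noncomputable def θ : Par r s → ℂ :=
  Sum.elim (fun p => star (U p.1 p.2.1.1 p.2.2))
    (Sum.elim (fun p => V p.1 p.2.1.1 p.2.2)
      (fun p => H p.1.1 p.1.2.1 p.1.2.2))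

open MvPolynomial in
lemma eval_g (hU : ∀ k a a', U k (r k a) a' = if a = a' then 1 else 0)
    (hV : ∀ k b b', V k (s k b) b' = if b = b' then 1 else 0)
    (hc : ∀ q, (U q.1.1)ᴴ * H q * V q.1.2 = 0) (v : Idx M N) :
    eval (θ r s U V H) (g r s v) = H v.1 v.2.1 v.2.2 := by
  classical
  have evalV : ∀ (j : Fin K) (y : Fin (M j)) (b : Fin d),
      eval (θ r s U V H) (Vpoly r s j y b) = V j y b := by
    intro j y b
    rw [Vpoly]
    by_cases h : y ∈ Set.range ⇑(s j)
    · rw [dif_pos h, eval_C]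
      conv_rhs => rw [← h.choose_spec]
      rw [hV j h.choose b]
    · rw [dif_neg h, eval_X]
      rfl
  rw [g]
  split_ifs with hdet
  · have key := solve_entry (U v.1.1.1) (V v.1.1.2) (H v.1) (r v.1.1.1) (s v.1.1.2)
      (hU v.1.1.1) (hV v.1.1.2) (hc v.1) hdet.1.choose hdet.2.choose
    rw [hdet.1.choose_spec, hdet.2.choose_spec] at key
    rw [key]
    simp only [map_neg, map_add, map_sum, _root_.map_mul, eval_X, evalV]
    simp only [θ, Sum.elim_inl, Sum.elim_inr]
  · rw [eval_X]
    rfl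


/-! ### Cardinality -/

lemma nat_card_sigma {α : Type} [Fintype α] (B : α → Type) [∀ a, Finite (B a)] :
    Nat.card (Σ a, B a) = ∑ a, Nat.card (B a) := by
  classical
  haveI : ∀ a, Fintype (B a) := fun a => Fintype.ofFinite _
  simp [Nat.card_eq_fintype_card, Fintype.card_sigma]

lemma nat_card_compl {α : Type} [Fintype α] (p : α → Prop) :
    Nat.card {x // ¬ p x} = Fintype.card α - Nat.card {x // p x} := by
  classical
  simp [Nat.card_eq_fintype_card, Fintype.card_subtype_compl]

lemma card_det : Nat.card {v : Idx M N // Det r s v}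
    = Nat.card {q : Fin K × Fin K // q.1 ≠ q.2} * (d * d) := by
  classical
  have E : (Σ _q : {q : Fin K × Fin K // q.1 ≠ q.2}, Fin d × Fin d)
      ≃ {v : Idx M N // Det r s v} := by
    refine Equiv.ofBijective (fun t => ⟨⟨t.1, (r t.1.1.1 t.2.1, s t.1.1.2 t.2.2)⟩,
      ⟨⟨t.2.1, rfl⟩, ⟨t.2.2, rfl⟩⟩⟩) ⟨?_, ?_⟩
    · rintro ⟨q1, a1, b1⟩ ⟨q2, a2, b2⟩ hF
      have h1 := congrArg Subtype.val hF
      dsimp only at h1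
      rw [Sigma.ext_iff] at h1
      obtain ⟨hq, hp⟩ := h1
      subst hq
      rw [heq_iff_eq, Prod.mk.injEq] at hp
      obtain rfl := (r q1.1.1).injective hp.1
      obtain rfl := (s q1.1.2).injective hp.2
      rfl
    · rintro ⟨⟨q, x, y⟩, ⟨⟨a, ha⟩, ⟨b, hb⟩⟩⟩
      exact ⟨⟨q, (a, b)⟩, Subtype.ext (by simp [ha, hb])⟩
  rw [← Nat.card_congr E, nat_card_sigma]
  simp [Nat.card_prod, Nat.card_eq_fintype_card, Finset.sum_const, Finset.card_univ,
    mul_comm]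

lemma card_Q (K : ℕ) : Nat.card {q : Fin K × Fin K // q.1 ≠ q.2} = K * K - K := by
  classical
  have h1 : Nat.card {q : Fin K × Fin K // ¬ (q.1 = q.2)}
      = Fintype.card (Fin K × Fin K) - Nat.card {q : Fin K × Fin K // q.1 = q.2} :=
    nat_card_compl _
  have E : Fin K ≃ {q : Fin K × Fin K // q.1 = q.2} := by
    refine Equiv.ofBijective (fun k => ⟨(k, k), rfl⟩) ⟨?_, ?_⟩
    · intro a b h
      simpa using congrArg (fun t => t.1.1) h
    · rintro ⟨⟨a, b⟩, h⟩
      cases h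
      exact ⟨a, rfl⟩
  rw [h1, ← Nat.card_congr E]
  simp [Nat.card_eq_fintype_card]

lemma card_par_lt (hK : 2 ≤ K) (hd1 : 1 ≤ d) (hdM : ∀ k, d ≤ M k) (hdN : ∀ k, d ≤ N k)
    (hcount : ∑ k, (M k + N k) < K * (K + 1) * d) :
    Nat.card (Par r s) < Nat.card (Idx M N) := by
  classical
  have hA : Nat.card (Σ k : Fin K, {x : Fin (N k) // x ∉ Set.range ⇑(r k)} × Fin d)
      = ∑ k, (N k - d) * d := by
    rw [nat_card_sigma]
    refine Finset.sum_congr rfl fun k _ => ?_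
    rw [Nat.card_prod]
    congr 1
    · rw [nat_card_compl (fun x => x ∈ Set.range ⇑(r k))]
      have e1 : Fin d ≃ {x : Fin (N k) // x ∈ Set.range ⇑(r k)} :=
        Equiv.ofInjective _ (r k).injective
      rw [← Nat.card_congr e1]
      simp [Nat.card_eq_fintype_card]
    · simp [Nat.card_eq_fintype_card]
  have hB : Nat.card (Σ k : Fin K, {y : Fin (M k) // y ∉ Set.range ⇑(s k)} × Fin d)
      = ∑ k, (M k - d) * d := by
    rw [nat_card_sigma]
    refine Finset.sum_congr rfl fun k _ => ?_
    rw [Nat.card_prod]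
    congr 1
    · rw [nat_card_compl (fun y => y ∈ Set.range ⇑(s k))]
      have e1 : Fin d ≃ {y : Fin (M k) // y ∈ Set.range ⇑(s k)} :=
        Equiv.ofInjective _ (s k).injective
      rw [← Nat.card_congr e1]
      simp [Nat.card_eq_fintype_card]
    · simp [Nat.card_eq_fintype_card]
  have hS : Nat.card {v : Idx M N // Det r s v} = (K * K - K) * (d * d) := by
    rw [card_det, card_Q]
  have hF : Nat.card {v : Idx M N // ¬ Det r s v}
      = Fintype.card (Idx M N) - (K * K - K) * (d * d) := by
    rw [nat_card_compl (Det r s), hS]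
  have hSle : (K * K - K) * (d * d) ≤ Fintype.card (Idx M N) := by
    rw [← hS, ← Nat.card_eq_fintype_card]
    exact Nat.card_le_card_of_injective Subtype.val Subtype.val_injective
  have hTot : Nat.card (Par r s)
      = (∑ k, (N k - d) * d) + ((∑ k, (M k - d) * d)
        + (Fintype.card (Idx M N) - (K * K - K) * (d * d))) := by
    rw [Nat.card_sum, Nat.card_sum, hA, hB, hF]
  -- key numeric inequality
  have eN : ∀ k : Fin K, (N k - d) * d + d * d = N k * d := by
    intro k
    have h1 : d * d ≤ N k * d := Nat.mul_le_mul_right d (hdN k)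
    rw [Nat.sub_mul, Nat.sub_add_cancel h1]
  have eM : ∀ k : Fin K, (M k - d) * d + d * d = M k * d := by
    intro k
    have h1 : d * d ≤ M k * d := Nat.mul_le_mul_right d (hdM k)
    rw [Nat.sub_mul, Nat.sub_add_cancel h1]
  have h2 : (∑ k, (N k - d) * d) + K * (d * d) = ∑ k, N k * d := by
    calc (∑ k, (N k - d) * d) + K * (d * d)
        = ∑ k, ((N k - d) * d + d * d) := by
          rw [Finset.sum_add_distrib, Finset.sum_const, Finset.card_univ,
            Fintype.card_fin, smul_eq_mul]
      _ = ∑ k, N k * d := Finset.sum_congr rfl fun k _ => eN k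
  have h3 : (∑ k, (M k - d) * d) + K * (d * d) = ∑ k, M k * d := by
    calc (∑ k, (M k - d) * d) + K * (d * d)
        = ∑ k, ((M k - d) * d + d * d) := by
          rw [Finset.sum_add_distrib, Finset.sum_const, Finset.card_univ,
            Fintype.card_fin, smul_eq_mul]
      _ = ∑ k, M k * d := Finset.sum_congr rfl fun k _ => eM k
  have h4 : (∑ k, M k * d) + (∑ k, N k * d) = (∑ k, (M k + N k)) * d := by
    rw [Finset.sum_mul, ← Finset.sum_add_distrib]
    exact Finset.sum_congr rfl fun k _ => by rw [add_mul]
  have h5 : (∑ k, (M k + N k)) * d < K * (K + 1) * d * d :=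
    mul_lt_mul_of_pos_right hcount (by omega)
  have e7 : K * (K + 1) * d * d = K * K * (d * d) + K * (d * d) := by ring
  have e8 : (K * K - K) * (d * d) = K * K * (d * d) - K * (d * d) :=
    Nat.sub_mul _ _ _
  have e9 : K * (d * d) ≤ K * K * (d * d) :=
    Nat.mul_le_mul_right _ (Nat.le_mul_of_pos_left K (by omega))
  rw [hTot, ← Nat.card_eq_fintype_card] at *
  omega

end IA

open IA

/-- **Corollary 1(a).** If all users have the same number of streams `d` and
`K(K+1)d > Σ_k (M_k + N_k)`, then interference alignment on all of `J` is generically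
impossible: some nonzero polynomial in the channel entries vanishes at every channel
realization admitting a linear interference-alignment solution. -/
theorem stmt_4 (K : ℕ) (hK : 2 ≤ K) (M N : Fin K → ℕ) (d : ℕ)
    (hd1 : 1 ≤ d) (hdM : ∀ k, d ≤ M k) (hdN : ∀ k, d ≤ N k)
    (hcount : ∑ k, (M k + N k) < K * (K + 1) * d) :
    ∃ p : MvPolynomial
        (Σ q : {q : Fin K × Fin K // q.1 ≠ q.2}, Fin (N q.1.1) × Fin (M q.1.2)) ℂ,
      p ≠ 0 ∧
      ∀ H : ∀ q : {q : Fin K × Fin K // q.1 ≠ q.2},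
          Matrix (Fin (N q.1.1)) (Fin (M q.1.2)) ℂ,
        MvPolynomial.eval (fun v => H v.1 v.2.1 v.2.2) p ≠ 0 →
        ¬ ∃ (U : ∀ k, Matrix (Fin (N k)) (Fin d) ℂ)
            (V : ∀ k, Matrix (Fin (M k)) (Fin d) ℂ),
          (∀ k, (U k).rank = d) ∧ (∀ k, (V k).rank = d) ∧
          ∀ q : {q : Fin K × Fin K // q.1 ≠ q.2},
            (U q.1.1)ᴴ * H q * V q.1.2 = 0 := by
  classical
  have hlt : ∀ (r : ∀ k, Fin d ↪ Fin (N k)) (s : ∀ k, Fin d ↪ Fin (M k)),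
      Fintype.card (Par r s) < Fintype.card (Idx M N) := by
    intro r s
    rw [← Nat.card_eq_fintype_card, ← Nat.card_eq_fintype_card]
    exact card_par_lt r s hK hd1 hdM hdN hcount
  have hP : ∀ c : (∀ k, Fin d ↪ Fin (N k)) × (∀ k, Fin d ↪ Fin (M k)),
      ∃ P : MvPolynomial (Idx M N) ℂ, P ≠ 0 ∧ MvPolynomial.aeval (g c.1 c.2) P = 0 :=
    fun c => alg_dep (hlt c.1 c.2) (g c.1 c.2)
  choose P hP0 hPa using hP
  refine ⟨∏ c, P c, ?_, ?_⟩
  · rw [Finset.prod_ne_zero_iff]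
    exact fun c _ => hP0 c
  · intro H hne
    rintro ⟨U, V, hrU, hrV, hcq⟩
    have hexr : ∀ k, ∃ rk : Fin d ↪ Fin (N k), IsUnit ((U k).submatrix rk id) :=
      fun k => exists_unit_submatrix (U k) (hrU k)
    have hexs : ∀ k, ∃ sk : Fin d ↪ Fin (M k), IsUnit ((V k).submatrix sk id) :=
      fun k => exists_unit_submatrix (V k) (hrV k)
    choose rr hrr using hexr
    choose ss hss using hexs
    set U' : ∀ k, Matrix (Fin (N k)) (Fin d) ℂ :=
      fun k => U k * ((U k).submatrix (rr k) id)⁻¹ with hU'def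
    set V' : ∀ k, Matrix (Fin (M k)) (Fin d) ℂ :=
      fun k => V k * ((V k).submatrix (ss k) id)⁻¹ with hV'def
    have hU' : ∀ k a a', U' k (rr k a) a' = if a = a' then 1 else 0 := by
      intro k a a'
      have h1 : U' k (rr k a) a'
          = (((U k).submatrix (rr k) id) * ((U k).submatrix (rr k) id)⁻¹) a a' := by
        simp [hU'def, Matrix.mul_apply, Matrix.submatrix_apply]
      rw [h1, Matrix.mul_nonsing_inv _ ((Matrix.isUnit_iff_isUnit_det _).mp (hrr k)),
        Matrix.one_apply]
    have hV' : ∀ k b b', V' k (ss k b) b' = if b = b' then 1 else 0 := by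
      intro k b b'
      have h1 : V' k (ss k b) b'
          = (((V k).submatrix (ss k) id) * ((V k).submatrix (ss k) id)⁻¹) b b' := by
        simp [hV'def, Matrix.mul_apply, Matrix.submatrix_apply]
      rw [h1, Matrix.mul_nonsing_inv _ ((Matrix.isUnit_iff_isUnit_det _).mp (hss k)),
        Matrix.one_apply]
    have hc' : ∀ q : {q : Fin K × Fin K // q.1 ≠ q.2},
        (U' q.1.1)ᴴ * H q * V' q.1.2 = 0 := by
      intro q
      have h0 := hcq q
      rw [Matrix.mul_assoc] at h0
      show (U q.1.1 * _)ᴴ * H q * (V q.1.2 * _) = 0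
      simp only [Matrix.conjTranspose_mul, Matrix.mul_assoc]
      rw [show H q * (V q.1.2 * ((V q.1.2).submatrix (ss q.1.2) id)⁻¹)
          = (H q * V q.1.2) * ((V q.1.2).submatrix (ss q.1.2) id)⁻¹ from
          (Matrix.mul_assoc _ _ _).symm]
      rw [show (U q.1.1)ᴴ * ((H q * V q.1.2) * ((V q.1.2).submatrix (ss q.1.2) id)⁻¹)
          = ((U q.1.1)ᴴ * (H q * V q.1.2)) * ((V q.1.2).submatrix (ss q.1.2) id)⁻¹ from
          (Matrix.mul_assoc _ _ _).symm]
      rw [show (U q.1.1)ᴴ * (H q * V q.1.2) = 0 from h0, Matrix.zero_mul, Matrix.mul_zero]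
    have hev : ∀ v : Idx M N,
        MvPolynomial.eval (θ rr ss U' V' H) (g rr ss v) = H v.1 v.2.1 v.2.2 :=
      eval_g rr ss U' V' H hU' hV' hc'
    have hz : MvPolynomial.eval (fun v : Idx M N => H v.1 v.2.1 v.2.2) (P (rr, ss)) = 0 := by
      have h1 := congrArg (MvPolynomial.eval (θ rr ss U' V' H)) (hPa (rr, ss))
      rw [map_zero] at h1
      dsimp only at h1
      rw [eval_aeval'] at h1
      rw [show (fun i : Idx M N => MvPolynomial.eval (θ rr ss U' V' H) (g rr ss i))
          = fun v : Idx M N => H v.1 v.2.1 v.2.2 from funext hev] at h1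
      exact h1
    apply hne
    rw [map_prod]
    exact Finset.prod_eq_zero (Finset.mem_univ (rr, ss)) hz
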